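/- Let p ≠ q be points in the plane, let x be a point on the line through p and q lying outside the closed segment [p, q], let H⁻ be one of the two open halfplanes bounded by line pq, and let z ∈ H⁻. Then there exists δ > 0 such that for every r ∈ H⁻ with ‖r − x‖ < δ, the point z lies in the open interior of the circumdisc of p, q, r. -/

import Mathlib

noncomputable section

/-- Points of the Euclidean plane. -/
abbrev Pt := EuclideanSpace ℝ (Fin 2)

/-- The orientation (cross product) determinant of the triple `(p, q, r)`. -/
def orient (p q r : Pt) : ℝ :=
  (q 0 - p 0) * (r 1 - p 1) - (q 1 - p 1) * (r 0 - p 0)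

/-- Auxiliary: the power-like quantity `‖w-m‖² - ‖p-m‖²` where `m` is the
midpoint of `p q`. -/
def discA (p q w : Pt) : ℝ :=
  (w 0 - (p 0 + q 0)/2)^2 + (w 1 - (p 1 + q 1)/2)^2 -
    ((p 0 - (p 0 + q 0)/2)^2 + (p 1 - (p 1 + q 1)/2)^2)

lemma coord_cont (i : Fin 2) : Continuous fun w : Pt => w i :=
  (EuclideanSpace.proj i).continuous

lemma orient_cont (p q : Pt) : Continuous (orient p q) := by
  unfold orient
  exact (continuous_const.mul ((coord_cont 1).sub continuous_const)).sub
    (continuous_const.mul ((coord_cont 0).sub continuous_const))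

lemma discA_cont (p q : Pt) : Continuous (discA p q) := by
  unfold discA
  exact ((((coord_cont 0).sub continuous_const).pow 2).add
    (((coord_cont 1).sub continuous_const).pow 2)).sub continuous_const

lemma dist_sq (u v : Pt) : dist u v = Real.sqrt ((u 0 - v 0)^2 + (u 1 - v 1)^2) := by
  rw [EuclideanSpace.dist_eq, Fin.sum_univ_two, Real.dist_eq, Real.dist_eq, sq_abs, sq_abs]

/-- The fundamental algebraic identity for the point on the perpendicular bisector
of `p q` with parameter `u`. -/
lemma expand_id (p q w : Pt) (u : ℝ) :
    (w 0 - ((p 0 + q 0)/2 - u * (q 1 - p 1)))^2 +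
      (w 1 - ((p 1 + q 1)/2 + u * (q 0 - p 0)))^2 -
      ((p 0 - ((p 0 + q 0)/2 - u * (q 1 - p 1)))^2 +
        (p 1 - ((p 1 + q 1)/2 + u * (q 0 - p 0)))^2) =
    discA p q w - 2 * u * orient p q w := by
  unfold discA orient; ring

lemma key_ineq (Ax Ar Az oz orr ε : ℝ) (hAx : 0 < Ax) (hAr : Ax/2 < Ar)
    (hoz : oz < 0) (hor : orr < 0) (horε : -ε < orr)
    (hε : ε = Ax/2 * (-oz) / (|Az| + 1)) : Ar * oz < Az * orr := by
  have habs : (0:ℝ) < |Az| + 1 := by positivity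
  have h1 : ε * (|Az| + 1) = Ax/2 * (-oz) := by
    rw [hε]; field_simp
  have hεpos : 0 < ε := by nlinarith
  have h2 : Az * orr ≥ -(|Az| * (-orr)) := by
    nlinarith [neg_abs_le Az, le_abs_self Az]
  have h3 : |Az| * (-orr) ≤ |Az| * ε := by
    have := abs_nonneg Az
    nlinarith
  nlinarith

/-- Let `x` be a point of the line through `p` and `q` lying outside the closed segment
`[p, q]`, and let `z` lie in the open halfplane `H⁻ = {orient p q · < 0}`.  Then for
every point `r` of the same open halfplane `H⁻` close enough to `x`, the point `z` lies
in the open interior of the circumdisc of `p, q, r`. -/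
theorem stmt12 (p q x z : Pt) (hpq : p ≠ q)
    (hxline : orient p q x = 0) (hxseg : x ∉ segment ℝ p q)
    (hz : orient p q z < 0) :
    ∃ δ > 0, ∀ r : Pt, orient p q r < 0 → dist r x < δ →
      ∃ c : Pt, ∃ ρ : ℝ,
        dist p c = ρ ∧ dist q c = ρ ∧ dist r c = ρ ∧ dist z c < ρ := by
  have hxl : (q 0 - p 0) * (x 1 - p 1) - (q 1 - p 1) * (x 0 - p 0) = 0 := hxline
  -- `p ≠ q` in coordinates
  have hab : 0 < (q 0 - p 0)^2 + (q 1 - p 1)^2 := by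
    rcases lt_or_ge 0 ((q 0 - p 0)^2 + (q 1 - p 1)^2) with h | h
    · exact h
    · exfalso
      apply hpq
      have h0 : q 0 - p 0 = 0 := by nlinarith [sq_nonneg (q 0 - p 0), sq_nonneg (q 1 - p 1)]
      have h1 : q 1 - p 1 = 0 := by nlinarith [sq_nonneg (q 0 - p 0), sq_nonneg (q 1 - p 1)]
      ext i; fin_cases i <;> simp <;> linarith
  -- `x` lies on the line: find the affine parameter `s`
  obtain ⟨s, hs0, hs1⟩ : ∃ s : ℝ, x 0 = p 0 + s * (q 0 - p 0) ∧ x 1 = p 1 + s * (q 1 - p 1) := by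
    rcases eq_or_ne (q 0 - p 0) 0 with h | h
    · have hb : q 1 - p 1 ≠ 0 := by
        intro hb; rw [h, hb] at hab; norm_num at hab
      refine ⟨(x 1 - p 1)/(q 1 - p 1), ?_, by field_simp; ring⟩
      have hs' : (x 1 - p 1)/(q 1 - p 1) * (q 1 - p 1) = x 1 - p 1 := div_mul_cancel₀ _ hb
      have hE : (q 1 - p 1) * (x 0) =
          (q 1 - p 1) * (p 0 + (x 1 - p 1)/(q 1 - p 1) * (q 0 - p 0)) := by
        linear_combination -hxl - (q 0 - p 0) * hs'
      exact mul_left_cancel₀ hb hE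
    · refine ⟨(x 0 - p 0)/(q 0 - p 0), by field_simp; ring, ?_⟩
      have hs' : (x 0 - p 0)/(q 0 - p 0) * (q 0 - p 0) = x 0 - p 0 := div_mul_cancel₀ _ h
      have hE : (q 0 - p 0) * (x 1) =
          (q 0 - p 0) * (p 1 + (x 0 - p 0)/(q 0 - p 0) * (q 1 - p 1)) := by
        linear_combination hxl - (q 1 - p 1) * hs'
      exact mul_left_cancel₀ h hE
  -- `x` outside the segment: the parameter is outside `[0,1]`
  have hs_out : s < 0 ∨ 1 < s := by
    by_contra hcon
    push_neg at hcon
    apply hxseg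
    rw [segment_eq_image']
    refine ⟨s, ⟨hcon.1, hcon.2⟩, ?_⟩
    ext i
    fin_cases i
    · show p 0 + s * (q 0 - p 0) = x 0
      exact hs0.symm
    · show p 1 + s * (q 1 - p 1) = x 1
      exact hs1.symm
  -- hence `discA p q x > 0`
  have hAx : 0 < discA p q x := by
    have hid : discA p q x = (s^2 - s) * ((q 0 - p 0)^2 + (q 1 - p 1)^2) := by
      unfold discA; rw [hs0, hs1]; ring
    rw [hid]
    have : 0 < s^2 - s := by rcases hs_out with h | h <;> nlinarith
    positivity
  set ε : ℝ := discA p q x / 2 * (-orient p q z) / (|discA p q z| + 1) with hε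
  have hεpos : 0 < ε := by
    rw [hε]
    have h1 : 0 < -orient p q z := by linarith
    positivity
  -- find δ by continuity
  have hev : ∀ᶠ r in nhds x, -ε < orient p q r ∧ discA p q x / 2 < discA p q r := by
    have e1 := ((orient_cont p q).tendsto x).eventually
      (eventually_gt_nhds (show -ε < orient p q x by rw [hxline]; linarith))
    have e2 := ((discA_cont p q).tendsto x).eventually
      (eventually_gt_nhds (by linarith : discA p q x / 2 < discA p q x))
    exact e1.and e2
  rw [Metric.eventually_nhds_iff] at hev
  obtain ⟨δ, hδpos, hδ⟩ := hev
  refine ⟨δ, hδpos, ?_⟩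
  intro r hor hrd
  obtain ⟨horε, hAr⟩ := hδ hrd
  have horne : orient p q r ≠ 0 := ne_of_lt hor
  -- the circumcenter
  set t : ℝ := discA p q r / (2 * orient p q r) with ht
  set c : Pt := (WithLp.equiv 2 (Fin 2 → ℝ)).symm
    ![(p 0 + q 0)/2 - t * (q 1 - p 1), (p 1 + q 1)/2 + t * (q 0 - p 0)] with hc
  have hc0 : c 0 = (p 0 + q 0)/2 - t * (q 1 - p 1) := rfl
  have hc1 : c 1 = (p 1 + q 1)/2 + t * (q 0 - p 0) := rfl
  have hto : 2 * t * orient p q r = discA p q r := by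
    rw [ht]; field_simp
  refine ⟨c, dist p c, rfl, ?_, ?_, ?_⟩
  · -- dist q c = dist p c
    rw [dist_sq, dist_sq]
    congr 1
    rw [hc0, hc1]
    have hq := expand_id p q q t
    have hq1 : discA p q q = 0 := by unfold discA; ring
    have hq2 : orient p q q = 0 := by unfold orient; ring
    rw [hq1, hq2] at hq
    linarith [hq]
  · -- dist r c = dist p c
    rw [dist_sq, dist_sq]
    congr 1
    rw [hc0, hc1]
    have hr := expand_id p q r t
    linarith [hr, hto]
  · -- dist z c < dist p c
    rw [dist_sq, dist_sq]
    have hmain : discA p q r * orient p q z < discA p q z * orient p q r :=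
      key_ineq (discA p q x) (discA p q r) (discA p q z) (orient p q z) (orient p q r) ε
        hAx hAr hz hor horε hε
    have hzto : 2 * t * orient p q z = discA p q r / orient p q r * orient p q z := by
      rw [ht]
      field_simp
    have h2 : discA p q z - discA p q r / orient p q r * orient p q z < 0 := by
      rw [sub_neg, div_mul_eq_mul_div, lt_div_iff_of_neg hor]
      linarith
    have hzz := expand_id p q z t
    rw [hc0, hc1]
    apply Real.sqrt_lt_sqrt (by positivity)
    linarith
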